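/- arXiv:1803.00790 — 2 statements merged into one kernel-verified Lean document; each statement's English description precedes it below -/
import Mathlib

section
/- Let (T_j)_{j≥1} be a strictly increasing sequence of positive reals with T_j → ∞, let (Θ_j)_{j≥1} be positive reals, and let a : (0,∞) × ℕ → [0,∞). Then there exists a unique nondecreasing right-continuous function x : [0,∞) → ℕ with x(0) = 0 satisfying, for every t ≥ 0, x(t) = #{ j ≥ 1 : T_j ≤ t and Θ_j ≤ a(T_j, x(T_j⁻)) }, where x(T_j⁻) denotes the left limit of x at T_j. Moreover x(t) ≤ #{ j ≥ 1 : T_j ≤ t } for every t ≥ 0. -/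
open scoped NNReal

section aux
variable (T Θ : ℕ → ℝ≥0) (a : ℝ≥0 → ℕ → ℝ≥0)

noncomputable def accF : ℕ → Finset ℕ
  | 0 => ∅
  | j+1 => accF j ∪ (if Θ j ≤ a (T j) ((accF j).card) then {j} else ∅)

lemma accF_eq_filter (j : ℕ) :
    accF T Θ a j
      = (Finset.range j).filter (fun i => Θ i ≤ a (T i) ((accF T Θ a i).card)) := by
  classical
  induction j with
  | zero => simp [accF]
  | succ k ih =>
    rw [Finset.range_add_one, Finset.filter_insert]
    by_cases h : Θ k ≤ a (T k) ((accF T Θ a k).card)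
    · simp only [accF, h, if_true, ← ih]
      rw [Finset.union_comm]
      simp [Finset.insert_eq, -Finset.singleton_union]
    · simp [accF, h, ← ih]

lemma finite_le (hTtop : Filter.Tendsto T Filter.atTop Filter.atTop) (t : ℝ≥0) :
    {j : ℕ | T j ≤ t}.Finite := by
  obtain ⟨N, hN⟩ := Filter.eventually_atTop.mp (hTtop.eventually_ge_atTop (t + 1))
  refine Set.Finite.subset (Finset.range N).finite_toSet (fun j hj => ?_)
  simp only [Finset.coe_range, Set.mem_Iio]
  by_contra h
  exact absurd (le_trans (hN j (le_of_not_gt h)) hj) (by simp)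

end aux

/-- Recursive thinning construction (proof of Proposition 2.1): given strictly
increasing positive times `T_j → ∞`, positive marks `Θ_j`, and a (pathwise
frozen) intensity functional `a`, there is a unique nondecreasing
right-continuous `x : [0,∞) → ℕ` with `x 0 = 0` such that
`x t = #{j : T j ≤ t ∧ Θ j ≤ a (T j) (x (T j⁻))}` for all `t`, where `x (T j⁻)`
(recorded by the auxiliary function `xm`) is the left limit of `x` at `T j`.
Moreover `x t ≤ #{j : T j ≤ t}`. -/
theorem statement4 (T : ℕ → ℝ≥0) (hTpos : ∀ j, 0 < T j) (hTmono : StrictMono T)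
    (hTtop : Filter.Tendsto T Filter.atTop Filter.atTop)
    (Θ : ℕ → ℝ≥0) (hΘpos : ∀ j, 0 < Θ j)
    (a : ℝ≥0 → ℕ → ℝ≥0) :
    (∃! x : ℝ≥0 → ℕ,
      Monotone x ∧ x 0 = 0 ∧
      -- right-continuity
      (∀ t : ℝ≥0, ∃ ε : ℝ≥0, 0 < ε ∧ ∀ u, t ≤ u → u < t + ε → x u = x t) ∧
      ∃ xm : ℕ → ℕ,
        -- `xm j` is the left limit of `x` at `T j`
        (∀ j : ℕ, ∃ ε : ℝ≥0, 0 < ε ∧ ∀ u, u < T j → T j < u + ε → x u = xm j) ∧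
        ∀ t : ℝ≥0, x t = {j : ℕ | T j ≤ t ∧ Θ j ≤ a (T j) (xm j)}.ncard) ∧
    (∀ x : ℝ≥0 → ℕ,
      (Monotone x ∧ x 0 = 0 ∧
        (∀ t : ℝ≥0, ∃ ε : ℝ≥0, 0 < ε ∧ ∀ u, t ≤ u → u < t + ε → x u = x t) ∧
        ∃ xm : ℕ → ℕ,
          (∀ j : ℕ, ∃ ε : ℝ≥0, 0 < ε ∧ ∀ u, u < T j → T j < u + ε → x u = xm j) ∧
          ∀ t : ℝ≥0, x t = {j : ℕ | T j ≤ t ∧ Θ j ≤ a (T j) (xm j)}.ncard) →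
      ∀ t : ℝ≥0, x t ≤ {j : ℕ | T j ≤ t}.ncard) := by
  classical
  -- notation
  set P : ℕ → Prop := fun j => Θ j ≤ a (T j) ((accF T Θ a j).card) with hP
  set x : ℝ≥0 → ℕ := fun t => {j : ℕ | T j ≤ t ∧ P j}.ncard with hxdef
  have hfin : ∀ t : ℝ≥0, {j : ℕ | T j ≤ t ∧ P j}.Finite := fun t =>
    (finite_le T hTtop t).subset (fun j hj => hj.1)
  -- step A for an arbitrary candidate: the left-limit values are determined
  have stepA : ∀ (x' : ℝ≥0 → ℕ) (xm' : ℕ → ℕ),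
      (∀ j : ℕ, ∃ ε : ℝ≥0, 0 < ε ∧ ∀ u, u < T j → T j < u + ε → x' u = xm' j) →
      (∀ t : ℝ≥0, x' t = {j : ℕ | T j ≤ t ∧ Θ j ≤ a (T j) (xm' j)}.ncard) →
      ∀ j, xm' j = ((Finset.range j).filter (fun i => Θ i ≤ a (T i) (xm' i))).card := by
    intro x' xm' hlim heq j
    obtain ⟨ε, hεpos, hε⟩ := hlim j
    set u : ℝ≥0 := (insert (T j - ε / 2) ((Finset.range j).image T)).max' (by simp)
      with hu
    have hεh : (0:ℝ≥0) < ε / 2 := by positivity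
    have hult : u < T j := by
      rw [hu, Finset.max'_lt_iff]
      intro b hb
      simp only [Finset.mem_insert, Finset.mem_image, Finset.mem_range] at hb
      rcases hb with rfl | ⟨i, hi, rfl⟩
      · exact tsub_lt_self (hTpos j) hεh
      · exact hTmono hi
    have hTju : T j < u + ε := by
      have h1 : T j - ε / 2 ≤ u := Finset.le_max' _ _ (by simp)
      have h2 : T j ≤ (T j - ε / 2) + ε / 2 := le_tsub_add
      calc T j ≤ (T j - ε / 2) + ε / 2 := h2
        _ < (T j - ε / 2) + ε := by
            exact add_lt_add_right (NNReal.half_lt_self hεpos.ne') _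
        _ ≤ u + ε := add_le_add_left h1 _
    have hx'u := hε u hult hTju
    have hset : {i : ℕ | T i ≤ u ∧ Θ i ≤ a (T i) (xm' i)}
        = ↑((Finset.range j).filter (fun i => Θ i ≤ a (T i) (xm' i))) := by
      ext i
      simp only [Set.mem_setOf_eq, Finset.coe_filter, Finset.mem_range]
      constructor
      · rintro ⟨h1, h2⟩
        exact ⟨hTmono.lt_iff_lt.mp (lt_of_le_of_lt h1 hult), h2⟩
      · rintro ⟨h1, h2⟩
        refine ⟨Finset.le_max' _ _ ?_, h2⟩
        simp only [Finset.mem_insert, Finset.mem_image, Finset.mem_range]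
        exact Or.inr ⟨i, h1, rfl⟩
    rw [← hx'u, heq u, hset, Set.ncard_coe_finset]
  -- our construction satisfies step A trivially
  have hxm : ∀ j, (accF T Θ a j).card
      = ((Finset.range j).filter (fun i => Θ i ≤ a (T i) ((accF T Θ a i).card))).card := by
    intro j; rw [accF_eq_filter]
  -- properties of x
  have hmono : Monotone x := by
    intro s t hst
    exact Set.ncard_le_ncard (fun j hj => ⟨le_trans hj.1 hst, hj.2⟩) (hfin t)
  have hzero : x 0 = 0 := by
    rw [hxdef]
    simp only
    convert Set.ncard_empty ℕ
    ext j
    simp only [Set.mem_setOf_eq, Set.mem_empty_iff_false, iff_false]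
    rintro ⟨h1, -⟩
    exact absurd h1 (not_le.mpr (hTpos j))
  have hrc : ∀ t : ℝ≥0, ∃ ε : ℝ≥0, 0 < ε ∧ ∀ u, t ≤ u → u < t + ε → x u = x t := by
    intro t
    obtain ⟨N, hN⟩ := Filter.eventually_atTop.mp (hTtop.eventually_ge_atTop (t + 2))
    set F : Finset ℕ := (Finset.range N).filter (fun j => t < T j) with hF
    set E : Finset ℝ≥0 := insert 1 (F.image (fun j => T j - t)) with hE
    have hEne : E.Nonempty := ⟨1, by simp [hE]⟩
    refine ⟨E.min' hEne, ?_, ?_⟩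
    · rw [Finset.lt_min'_iff]
      intro b hb
      simp only [hE, Finset.mem_insert, Finset.mem_image, hF, Finset.mem_filter,
        Finset.mem_range] at hb
      rcases hb with rfl | ⟨i, ⟨-, hi⟩, rfl⟩
      · exact one_pos
      · exact tsub_pos_of_lt hi
    · intro u htu hu
      have hε1 : E.min' hEne ≤ 1 := Finset.min'_le _ _ (by simp [hE])
      have hsets : {j : ℕ | T j ≤ u ∧ P j} = {j : ℕ | T j ≤ t ∧ P j} := by
        ext j
        simp only [Set.mem_setOf_eq]
        refine ⟨fun ⟨h1, h2⟩ => ⟨?_, h2⟩, fun ⟨h1, h2⟩ => ⟨le_trans h1 htu, h2⟩⟩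
        by_contra hc
        push_neg at hc
        rcases lt_or_ge j N with hjN | hjN
        · have hmem : T j - t ∈ E := by
            simp only [hE, Finset.mem_insert, Finset.mem_image, hF, Finset.mem_filter,
              Finset.mem_range]
            exact Or.inr ⟨j, ⟨hjN, hc⟩, rfl⟩
          have : t + E.min' hEne ≤ T j := by
            calc t + E.min' hEne ≤ t + (T j - t) := add_le_add_right (Finset.min'_le _ _ hmem) _
              _ = T j := add_tsub_cancel_of_le hc.le
          exact absurd (lt_of_lt_of_le hu (le_trans this h1)) (lt_irrefl u)
        · have : t + 2 ≤ T j := hN j hjN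
          have : u < T j := by
            calc u < t + E.min' hEne := hu
              _ ≤ t + 1 := add_le_add_right hε1 _
              _ < t + 2 := by norm_num
              _ ≤ T j := this
          exact absurd (lt_of_lt_of_le this h1) (lt_irrefl u)
      rw [hxdef]
      simp only
      rw [hsets]
  have hlimx : ∀ j : ℕ, ∃ ε : ℝ≥0, 0 < ε ∧
      ∀ u, u < T j → T j < u + ε → x u = (accF T Θ a j).card := by
    intro j
    set E : Finset ℝ≥0 := insert (T j) ((Finset.range j).image (fun i => T j - T i)) with hE
    have hEne : E.Nonempty := ⟨T j, by simp [hE]⟩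
    refine ⟨E.min' hEne, ?_, ?_⟩
    · rw [Finset.lt_min'_iff]
      intro b hb
      simp only [hE, Finset.mem_insert, Finset.mem_image, Finset.mem_range] at hb
      rcases hb with rfl | ⟨i, hi, rfl⟩
      · exact hTpos j
      · exact tsub_pos_of_lt (hTmono hi)
    · intro u hu hTu
      have hset : {i : ℕ | T i ≤ u ∧ P i}
          = ↑((Finset.range j).filter (fun i => Θ i ≤ a (T i) ((accF T Θ a i).card))) := by
        ext i
        simp only [Set.mem_setOf_eq, Finset.coe_filter, Finset.mem_range]
        constructor
        · rintro ⟨h1, h2⟩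
          exact ⟨hTmono.lt_iff_lt.mp (lt_of_le_of_lt h1 hu), h2⟩
        · rintro ⟨h1, h2⟩
          refine ⟨?_, h2⟩
          have hmem : T j - T i ∈ E := by
            simp only [hE, Finset.mem_insert, Finset.mem_image, Finset.mem_range]
            exact Or.inr ⟨i, h1, rfl⟩
          have h3 : T i + E.min' hEne ≤ T j := by
            calc T i + E.min' hEne ≤ T i + (T j - T i) :=
              add_le_add_right (Finset.min'_le _ _ hmem) _
              _ = T j := add_tsub_cancel_of_le (hTmono h1).le
          have : T i + E.min' hEne < u + E.min' hEne := lt_of_le_of_lt h3 hTu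
          exact (lt_of_add_lt_add_right this).le
      rw [hxdef]
      simp only
      rw [hset, Set.ncard_coe_finset, ← accF_eq_filter]
  have hxprops : Monotone x ∧ x 0 = 0 ∧
      (∀ t : ℝ≥0, ∃ ε : ℝ≥0, 0 < ε ∧ ∀ u, t ≤ u → u < t + ε → x u = x t) ∧
      ∃ xm : ℕ → ℕ,
        (∀ j : ℕ, ∃ ε : ℝ≥0, 0 < ε ∧ ∀ u, u < T j → T j < u + ε → x u = xm j) ∧
        ∀ t : ℝ≥0, x t = {j : ℕ | T j ≤ t ∧ Θ j ≤ a (T j) (xm j)}.ncard :=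
    ⟨hmono, hzero, hrc, fun j => (accF T Θ a j).card, hlimx, fun t => rfl⟩
  constructor
  · refine ⟨x, hxprops, ?_⟩
    rintro x' ⟨-, -, -, xm', hlim', heq'⟩
    have hA := stepA x' xm' hlim' heq'
    have hB : ∀ j, xm' j = (accF T Θ a j).card := by
      intro j
      induction j using Nat.strong_induction_on with
      | _ j ih =>
        rw [hA j, accF_eq_filter]
        congr 1
        apply Finset.filter_congr
        intro i hi
        rw [ih i (Finset.mem_range.mp hi)]
    funext t
    rw [heq' t, hxdef]
    simp only
    congr 1
    ext j
    simp only [Set.mem_setOf_eq, hB j, hP]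
  · rintro x' ⟨-, -, -, xm', -, heq'⟩ t
    rw [heq' t]
    exact Set.ncard_le_ncard (fun j hj => hj.1) (finite_le T hTtop t)
end

section
/- Fix an integer m ≥ 1 and, for each ι ∈ {1,…,m}, a set Q^ι ⊆ (0,∞) × (0,∞) such that Q^ι ∩ ((0,t] × (0,M]) is finite for all t, M > 0 and no two points of Q^ι share the same first coordinate. Given an intensity functional λ = (λ^ι)_{ι} : (0,∞) × ℕ^m → [0,∞)^m, call x = (x^ι)_{ι} : [0,∞) → ℕ^m a solution of the thinning equation for λ if each x^ι is nondecreasing and right-continuous with x^ι(0) = 0, and for all t ≥ 0 and all ι, x^ι(t) = #{ (s,θ) ∈ Q^ι : s ≤ t and θ ≤ λ^ι(s, x(s⁻)) } (in particular this set is finite), where x(s⁻) is the componentwise left limit. Let α and β be two intensity functionals that are strongly ordered: α^ι(t,y₁) ≤ β^ι(t,y₂) for every t > 0, every ι, and all y₁ ≤ y₂ componentwise in ℕ^m. If the thinning equation for β admits a unique solution y, then the thinning equation for α admits a unique solution x, and x is strongly dominated by y: for each ι every jump time of x^ι is a jump time of y^ι, so y^ι − x^ι is nondecreasing; in particular x(t)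 ≤ y(t) componentwise for all t ≥ 0. -/
open scoped NNReal

/-- `x` is a solution of the thinning equation driven by the point
configurations `Q = (Q^ι)` with intensity functional `lam`:
each `x^ι` is nondecreasing, right-continuous, starts at `0`, and
`x^ι(t) = #{(s,θ) ∈ Q^ι : s ≤ t, θ ≤ lam^ι(s, x(s⁻))}` (a finite set),
where the componentwise left limit `x(s⁻)` is recorded by `xm`. -/
def IsThinningSolution (m : ℕ) (Q : Fin m → Set (ℝ≥0 × ℝ≥0))
    (lam : ℝ≥0 → (Fin m → ℕ) → Fin m → ℝ≥0) (x : ℝ≥0 → Fin m → ℕ) : Prop :=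
  (∀ ι, Monotone fun t => x t ι) ∧ (∀ ι, x 0 ι = 0) ∧
  (∀ (ι : Fin m) (t : ℝ≥0), ∃ ε : ℝ≥0, 0 < ε ∧ ∀ u, t ≤ u → u < t + ε → x u ι = x t ι) ∧
  ∃ xm : ℝ≥0 → Fin m → ℕ,
    (∀ s : ℝ≥0, 0 < s → ∃ ε : ℝ≥0, 0 < ε ∧ ∀ u, u < s → s < u + ε → x u = xm s) ∧
    ∀ (t : ℝ≥0) (ι : Fin m),
      {q : ℝ≥0 × ℝ≥0 | q ∈ Q ι ∧ q.1 ≤ t ∧ q.2 ≤ lam q.1 (xm q.1) ι}.Finite ∧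
      x t ι = {q : ℝ≥0 × ℝ≥0 | q ∈ Q ι ∧ q.1 ≤ t ∧ q.2 ≤ lam q.1 (xm q.1) ι}.ncard

namespace Statement5Aux

lemma exists_between (s ε : ℝ≥0) (hs : 0 < s) (hε : 0 < ε) : ∃ u, u < s ∧ s < u + ε := by
  refine ⟨s - ε / 2, tsub_lt_self hs (half_pos hε), ?_⟩
  rcases le_total (ε / 2) s with h | h
  · calc s = s - ε / 2 + ε / 2 := (tsub_add_cancel_of_le h).symm
    _ < s - ε / 2 + ε := add_lt_add_right (half_lt_self hε) _
  · calc s ≤ ε / 2 := h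
    _ < ε := half_lt_self hε
    _ ≤ s - ε / 2 + ε := le_add_self

lemma window (s : ℝ≥0) (hs : 0 < s) (D : Set ℝ≥0) (hD : D.Finite) (hDs : ∀ v ∈ D, v < s) :
    ∃ ε : ℝ≥0, 0 < ε ∧ ∀ u, u < s → s < u + ε → ∀ v ∈ D, v ≤ u := by
  set d := hD.toFinset.sup id with hd
  have hds : d < s := by
    rw [hd]
    exact Finset.sup_lt_iff (show (⊥ : ℝ≥0) < s from hs) |>.2
      (fun v hv => hDs v (hD.mem_toFinset.1 hv))
  refine ⟨s - d, tsub_pos_of_lt hds, fun u hu1 hu2 v hv => ?_⟩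
  have hvd : v ≤ d := Finset.le_sup (f := id) (hD.mem_toFinset.2 hv)
  have hdu : d < u := by
    by_contra hcon
    push_neg at hcon
    have : u + (s - d) ≤ d + (s - d) := add_le_add_left hcon _
    rw [add_tsub_cancel_of_le hds.le] at this
    exact absurd hu2 (not_lt.2 this)
  exact hvd.trans hdu.le

lemma pick (s ε : ℝ≥0) (hs : 0 < s) (hε : 0 < ε) (D : Set ℝ≥0) (hD : D.Finite)
    (hDs : ∀ v ∈ D, v < s) : ∃ u, u < s ∧ s < u + ε ∧ ∀ v ∈ D, v ≤ u := by
  obtain ⟨ε', hε', hw⟩ := window s hs D hD hDs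
  obtain ⟨u, hu1, hu2⟩ := exists_between s (min ε ε') hs (lt_min hε hε')
  exact ⟨u, hu1, hu2.trans_le (add_le_add_right (min_le_left _ _) u),
    hw u hu1 (hu2.trans_le (add_le_add_right (min_le_right _ _) u))⟩



variable {m : ℕ} (A : Fin m → Set (ℝ≥0 × ℝ≥0)) (a : ℝ≥0 → (Fin m → ℕ) → Fin m → ℝ≥0)

/-- fuel-based solution of the thinning fixed point equation -/
noncomputable def G : ℕ → ℝ≥0 → Fin m → ℕ
  | 0, _, _ => 0
  | (n+1), s, ι =>
      {q : ℝ≥0 × ℝ≥0 | q ∈ A ι ∧ q.1 < s ∧ q.2 ≤ a q.1 (G n q.1) ι}.ncard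

/-- event times strictly before `s` -/
def T (s : ℝ≥0) : Set ℝ≥0 := {u | u < s ∧ ∃ ι, ∃ q ∈ A ι, q.1 = u}

noncomputable def mu (s : ℝ≥0) : ℕ := (T A s).ncard

noncomputable def F (s : ℝ≥0) : Fin m → ℕ := G A a (mu A s) s

lemma mem_T {ι : Fin m} {q : ℝ≥0 × ℝ≥0} {s : ℝ≥0} (hq : q ∈ A ι) (h : q.1 < s) :
    q.1 ∈ T A s := ⟨h, ι, q, hq, rfl⟩

lemma T_mono {s t : ℝ≥0} (h : s ≤ t) : T A s ⊆ T A t :=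
  fun u ⟨hu, hw⟩ => ⟨hu.trans_le h, hw⟩

variable (hAfin : ∀ (ι : Fin m) (t : ℝ≥0), {q : ℝ≥0 × ℝ≥0 | q ∈ A ι ∧ q.1 ≤ t}.Finite)

include hAfin

lemma T_finite (s : ℝ≥0) : (T A s).Finite := by
  refine Set.Finite.subset (Set.finite_iUnion
    (fun ι => ((hAfin ι s).image Prod.fst))) ?_
  rintro u ⟨hu, ι, q, hq, rfl⟩
  exact Set.mem_iUnion.2 ⟨ι, ⟨q, ⟨hq, hu.le⟩, rfl⟩⟩

lemma mu_lt {u s : ℝ≥0} (h : u ∈ T A s) : mu A u < mu A s := by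
  apply Set.ncard_lt_ncard _ (T_finite A hAfin s)
  constructor
  · exact T_mono A h.1.le
  · intro hsub
    exact absurd (hsub h).1 (lt_irrefl u)

lemma mu_le {u s : ℝ≥0} (h : u ≤ s) : mu A u ≤ mu A s :=
  Set.ncard_le_ncard (T_mono A h) (T_finite A hAfin s)

lemma G_zero {s : ℝ≥0} (h : mu A s = 0) (n : ℕ) : G A a n s = fun _ => 0 := by
  have hT : T A s = ∅ := (Set.ncard_eq_zero (T_finite A hAfin s)).1 h
  cases n with
  | zero => rfl
  | succ n =>
    funext ι
    show Set.ncard _ = 0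
    have : {q : ℝ≥0 × ℝ≥0 | q ∈ A ι ∧ q.1 < s ∧ q.2 ≤ a q.1 (G A a n q.1) ι} = ∅ := by
      ext q
      simp only [Set.mem_setOf_eq, Set.mem_empty_iff_false, iff_false, not_and]
      intro hq hlt
      exact absurd (mem_T A hq hlt) (by rw [hT]; exact Set.notMem_empty _)
    rw [this, Set.ncard_empty]

lemma G_stable : ∀ (k n₁ n₂ : ℕ) (s : ℝ≥0), mu A s ≤ k → mu A s ≤ n₁ → mu A s ≤ n₂ →
    G A a n₁ s = G A a n₂ s := by
  intro k
  induction k with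
  | zero =>
    intro n₁ n₂ s hk _ _
    rw [G_zero A a hAfin (Nat.le_zero.1 hk), G_zero A a hAfin (Nat.le_zero.1 hk)]
  | succ k ih =>
    intro n₁ n₂ s _ h1 h2
    rcases Nat.eq_zero_or_pos (mu A s) with h0 | hpos
    · rw [G_zero A a hAfin h0, G_zero A a hAfin h0]
    obtain ⟨i, rfl⟩ := Nat.exists_eq_succ_of_ne_zero (by omega : n₁ ≠ 0)
    obtain ⟨j, rfl⟩ := Nat.exists_eq_succ_of_ne_zero (by omega : n₂ ≠ 0)
    funext ι
    show Set.ncard _ = Set.ncard _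
    congr 1
    ext q
    simp only [Set.mem_setOf_eq]
    constructor
    · rintro ⟨hq, hlt, h3⟩
      refine ⟨hq, hlt, ?_⟩
      rwa [ih i j q.1 (by have := mu_lt A hAfin (mem_T A hq hlt); omega)
        (by have := mu_lt A hAfin (mem_T A hq hlt); omega)
        (by have := mu_lt A hAfin (mem_T A hq hlt); omega)] at h3
    · rintro ⟨hq, hlt, h3⟩
      refine ⟨hq, hlt, ?_⟩
      rwa [← ih i j q.1 (by have := mu_lt A hAfin (mem_T A hq hlt); omega)
        (by have := mu_lt A hAfin (mem_T A hq hlt); omega)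
        (by have := mu_lt A hAfin (mem_T A hq hlt); omega)] at h3

lemma F_eq (s : ℝ≥0) (ι : Fin m) :
    F A a s ι = {q : ℝ≥0 × ℝ≥0 | q ∈ A ι ∧ q.1 < s ∧ q.2 ≤ a q.1 (F A a q.1) ι}.ncard := by
  have h1 : F A a s = G A a (mu A s + 1) s :=
    G_stable A a hAfin (mu A s) (mu A s) (mu A s + 1) s le_rfl le_rfl (by omega)
  rw [show F A a s ι = G A a (mu A s + 1) s ι from congrFun h1 ι]
  show Set.ncard _ = Set.ncard _
  congr 1
  ext q
  simp only [Set.mem_setOf_eq]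
  constructor
  · rintro ⟨hq, hlt, h3⟩
    have hGF : G A a (mu A s) q.1 = F A a q.1 := G_stable A a hAfin (mu A s) (mu A s)
      (mu A q.1) q.1 (mu_le A hAfin hlt.le) (mu_le A hAfin hlt.le) le_rfl
    exact ⟨hq, hlt, by rwa [hGF] at h3⟩
  · rintro ⟨hq, hlt, h3⟩
    have hGF : G A a (mu A s) q.1 = F A a q.1 := G_stable A a hAfin (mu A s) (mu A s)
      (mu A q.1) q.1 (mu_le A hAfin hlt.le) (mu_le A hAfin hlt.le) le_rfl
    exact ⟨hq, hlt, by rwa [← hGF] at h3⟩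


end Statement5Aux

/-- Pathwise form of Proposition 2.1: if `a` and `b` are strongly ordered
intensity functionals and the thinning equation for `b` has a unique solution
`y`, then the thinning equation for `a` has a unique solution `x`, which is
strongly dominated by `y` (the differences `y^ι − x^ι` are nondecreasing); in
particular `x ≤ y` componentwise. -/
theorem statement5 (m : ℕ) (hm : 1 ≤ m) (Q : Fin m → Set (ℝ≥0 × ℝ≥0))
    -- atoms lie in `(0,∞) × (0,∞)`
    (hQpos : ∀ ι, ∀ q ∈ Q ι, 0 < q.1 ∧ 0 < q.2)
    -- local finiteness
    (hQfin : ∀ (ι : Fin m) (t M : ℝ≥0), 0 < t → 0 < M →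
      (Q ι ∩ Set.Ioc 0 t ×ˢ Set.Ioc 0 M).Finite)
    -- no two atoms of `Q^ι` share the same time coordinate
    (hQinj : ∀ ι, ∀ q ∈ Q ι, ∀ q' ∈ Q ι, q.1 = q'.1 → q = q')
    (a b : ℝ≥0 → (Fin m → ℕ) → Fin m → ℝ≥0)
    -- strong ordering `a ≤_s b`
    (hab : ∀ (t : ℝ≥0), 0 < t → ∀ (ι : Fin m) (y₁ y₂ : Fin m → ℕ),
      (∀ κ, y₁ κ ≤ y₂ κ) → a t y₁ ι ≤ b t y₂ ι)
    (hb : ∃! y, IsThinningSolution m Q b y) :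
    (∃! x, IsThinningSolution m Q a x) ∧
    ∀ x y, IsThinningSolution m Q a x → IsThinningSolution m Q b y →
      (∀ (ι : Fin m) (s t : ℝ≥0), s ≤ t →
        (x t ι : ℤ) - (x s ι : ℤ) ≤ (y t ι : ℤ) - (y s ι : ℤ)) ∧
      (∀ (t : ℝ≥0) (ι : Fin m), x t ι ≤ y t ι) := by
  classical
  open Statement5Aux in
  obtain ⟨y, hy, hyuniq⟩ := hb
  obtain ⟨hymono, hy0, hyrc, ym, hymlim, hyeq⟩ := hy
  -- the accepted atoms of the `b`-solution
  set A : Fin m → Set (ℝ≥0 × ℝ≥0) :=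
    fun ι => {q | q ∈ Q ι ∧ q.2 ≤ b q.1 (ym q.1) ι} with hA
  have hAQ : ∀ (ι : Fin m) (q : ℝ≥0 × ℝ≥0), q ∈ A ι → q ∈ Q ι := by
    intro ι q hq; rw [hA] at hq; exact hq.1
  have hsetA : ∀ (ι : Fin m) (t : ℝ≥0),
      {q : ℝ≥0 × ℝ≥0 | q ∈ Q ι ∧ q.1 ≤ t ∧ q.2 ≤ b q.1 (ym q.1) ι}
        = {q : ℝ≥0 × ℝ≥0 | q ∈ A ι ∧ q.1 ≤ t} := by
    intro ι t; ext q; rw [hA]; simp only [Set.mem_setOf_eq]; tauto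
  have hAfin : ∀ (ι : Fin m) (t : ℝ≥0), {q : ℝ≥0 × ℝ≥0 | q ∈ A ι ∧ q.1 ≤ t}.Finite := by
    intro ι t; rw [← hsetA]; exact (hyeq t ι).1
  have hyval : ∀ (t : ℝ≥0) (ι : Fin m),
      y t ι = {q : ℝ≥0 × ℝ≥0 | q ∈ A ι ∧ q.1 ≤ t}.ncard := by
    intro t ι; rw [← hsetA]; exact (hyeq t ι).2
  have hApos : ∀ (ι : Fin m) (q : ℝ≥0 × ℝ≥0), q ∈ A ι → 0 < q.1 ∧ 0 < q.2 :=
    fun ι q hq => hQpos ι q (hAQ ι q hq)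
  have hAltfin : ∀ (ι : Fin m) (s : ℝ≥0), {q : ℝ≥0 × ℝ≥0 | q ∈ A ι ∧ q.1 < s}.Finite :=
    fun ι s => (hAfin ι s).subset (fun q hq => ⟨hq.1, hq.2.le⟩)
  -- value of the left limit of y
  have hymval : ∀ s : ℝ≥0, 0 < s → ∀ ι : Fin m,
      ym s ι = {q : ℝ≥0 × ℝ≥0 | q ∈ A ι ∧ q.1 < s}.ncard := by
    intro s hs ι
    obtain ⟨ε, hε, hlim⟩ := hymlim s hs
    obtain ⟨u, hu1, hu2, hu3⟩ := Statement5Aux.pick s ε hs hε (Statement5Aux.T A s)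
      (Statement5Aux.T_finite A hAfin s) (fun v hv => hv.1)
    have h1 : y u = ym s := hlim u hu1 hu2
    have h2 : {q : ℝ≥0 × ℝ≥0 | q ∈ A ι ∧ q.1 ≤ u} = {q : ℝ≥0 × ℝ≥0 | q ∈ A ι ∧ q.1 < s} := by
      ext q
      simp only [Set.mem_setOf_eq]
      exact ⟨fun ⟨h, hle⟩ => ⟨h, hle.trans_lt hu1⟩,
        fun ⟨h, hlt⟩ => ⟨h, hu3 q.1 (Statement5Aux.mem_T A h hlt)⟩⟩
    rw [← congrFun h1 ι, hyval u ι, h2]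
  -- the candidate solution for `a`
  set Fa : ℝ≥0 → Fin m → ℕ := Statement5Aux.F A a with hFa
  have hFeq : ∀ (s : ℝ≥0) (ι : Fin m),
      Fa s ι = {q : ℝ≥0 × ℝ≥0 | q ∈ A ι ∧ q.1 < s ∧ q.2 ≤ a q.1 (Fa q.1) ι}.ncard :=
    fun s ι => Statement5Aux.F_eq A a hAfin s ι
  have hFym : ∀ s : ℝ≥0, 0 < s → ∀ κ : Fin m, Fa s κ ≤ ym s κ := by
    intro s hs κ
    rw [hymval s hs κ, hFeq s κ]
    exact Set.ncard_le_ncard (fun q hq => ⟨hq.1, hq.2.1⟩) (hAltfin κ s)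
  have hacc_mem : ∀ (ι : Fin m) (q : ℝ≥0 × ℝ≥0), q ∈ Q ι → 0 < q.1 →
      q.2 ≤ a q.1 (Fa q.1) ι → q ∈ A ι := by
    intro ι q hq hpos hacc
    rw [hA]
    exact ⟨hq, hacc.trans (hab q.1 hpos ι (Fa q.1) (ym q.1) (fun κ => hFym q.1 hpos κ))⟩
  have hsetle : ∀ (t : ℝ≥0) (ι : Fin m),
      {q : ℝ≥0 × ℝ≥0 | q ∈ Q ι ∧ q.1 ≤ t ∧ q.2 ≤ a q.1 (Fa q.1) ι}
        = {q : ℝ≥0 × ℝ≥0 | q ∈ A ι ∧ q.1 ≤ t ∧ q.2 ≤ a q.1 (Fa q.1) ι} := by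
    intro t ι
    ext q
    simp only [Set.mem_setOf_eq]
    exact ⟨fun ⟨h1, h2, h3⟩ => ⟨hacc_mem ι q h1 (hQpos ι q h1).1 h3, h2, h3⟩,
      fun ⟨h1, h2, h3⟩ => ⟨hAQ ι q h1, h2, h3⟩⟩
  have hsetlt : ∀ (s : ℝ≥0) (ι : Fin m),
      {q : ℝ≥0 × ℝ≥0 | q ∈ Q ι ∧ q.1 < s ∧ q.2 ≤ a q.1 (Fa q.1) ι}
        = {q : ℝ≥0 × ℝ≥0 | q ∈ A ι ∧ q.1 < s ∧ q.2 ≤ a q.1 (Fa q.1) ι} := by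
    intro s ι
    ext q
    simp only [Set.mem_setOf_eq]
    exact ⟨fun ⟨h1, h2, h3⟩ => ⟨hacc_mem ι q h1 (hQpos ι q h1).1 h3, h2, h3⟩,
      fun ⟨h1, h2, h3⟩ => ⟨hAQ ι q h1, h2, h3⟩⟩
  set x : ℝ≥0 → Fin m → ℕ :=
    fun t ι => {q : ℝ≥0 × ℝ≥0 | q ∈ A ι ∧ q.1 ≤ t ∧ q.2 ≤ a q.1 (Fa q.1) ι}.ncard with hxdef
  have hxval : ∀ (t : ℝ≥0) (ι : Fin m),
      x t ι = {q : ℝ≥0 × ℝ≥0 | q ∈ A ι ∧ q.1 ≤ t ∧ q.2 ≤ a q.1 (Fa q.1) ι}.ncard :=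
    fun t ι => rfl
  have hCfin : ∀ (t : ℝ≥0) (ι : Fin m),
      {q : ℝ≥0 × ℝ≥0 | q ∈ A ι ∧ q.1 ≤ t ∧ q.2 ≤ a q.1 (Fa q.1) ι}.Finite :=
    fun t ι => (hAfin ι t).subset (fun q hq => ⟨hq.1, hq.2.1⟩)
  -- x is a thinning solution for a
  have hx : IsThinningSolution m Q a x := by
    refine ⟨?_, ?_, ?_, Fa, ?_, ?_⟩
    · -- monotone
      intro ι s t hst
      show x s ι ≤ x t ι
      rw [hxval s ι, hxval t ι]
      exact Set.ncard_le_ncard (fun q hq => ⟨hq.1, hq.2.1.trans hst, hq.2.2⟩) (hCfin t ι)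
    · -- zero at 0
      intro ι
      rw [hxval 0 ι]
      have : {q : ℝ≥0 × ℝ≥0 | q ∈ A ι ∧ q.1 ≤ 0 ∧ q.2 ≤ a q.1 (Fa q.1) ι} = ∅ := by
        ext q
        simp only [Set.mem_setOf_eq, Set.mem_empty_iff_false, iff_false, not_and]
        intro hq hle
        exact fun _ => absurd (le_antisymm hle zero_le) (hApos ι q hq).1.ne'
      rw [this, Set.ncard_empty]
    · -- right continuity
      intro ι t
      set D : Set ℝ≥0 := Prod.fst ''
        {q : ℝ≥0 × ℝ≥0 | q ∈ A ι ∧ q.1 ≤ t + 1 ∧ t < q.1 ∧ q.2 ≤ a q.1 (Fa q.1) ι} with hD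
      have hDfin : D.Finite := ((hAfin ι (t + 1)).subset (fun q hq => ⟨hq.1, hq.2.1⟩)).image _
      have key : ∀ ε : ℝ≥0, (∀ v ∈ D, ¬ v < t + ε) → ε ≤ 1 → ∀ u, t ≤ u → u < t + ε →
          x u ι = x t ι := by
        intro ε hnone hε1 u hu1 hu2
        rw [hxval u ι, hxval t ι]
        congr 1
        ext q
        simp only [Set.mem_setOf_eq]
        constructor
        · rintro ⟨h1, h2, h3⟩
          refine ⟨h1, ?_, h3⟩
          by_contra hcon
          push_neg at hcon
          have hqD : q.1 ∈ D := ⟨q, ⟨h1, h2.trans (hu2.le.trans (add_le_add_right hε1 t)),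
            hcon, h3⟩, rfl⟩
          exact hnone q.1 hqD (h2.trans_lt hu2)
        · rintro ⟨h1, h2, h3⟩
          exact ⟨h1, h2.trans hu1, h3⟩
      rcases D.eq_empty_or_nonempty with hne | hne
      · refine ⟨1, one_pos, key 1 (by rw [hne]; simp) le_rfl⟩
      · set e := sInf D with he
        have heD : e ∈ D := Set.Nonempty.csInf_mem hne hDfin
        have hte : t < e := by
          obtain ⟨q, hq, hqe⟩ := heD
          exact hqe ▸ hq.2.2.1
        have hee : e ≤ t + 1 := by
          obtain ⟨q, hq, hqe⟩ := heD
          exact hqe ▸ hq.2.1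
        refine ⟨e - t, tsub_pos_of_lt hte, ?_⟩
        have ht : t + (e - t) = e := add_tsub_cancel_of_le hte.le
        refine key (e - t) ?_ ?_
        · intro v hv
          rw [ht]
          exact not_lt.2 (csInf_le (OrderBot.bddBelow D) hv)
        · have := tsub_le_tsub_right hee t
          rwa [add_tsub_cancel_left] at this
      -- left limits are given by Fa
    · intro s hs
      obtain ⟨ε, hε, hw⟩ := Statement5Aux.window s hs (Statement5Aux.T A s)
        (Statement5Aux.T_finite A hAfin s) (fun v hv => hv.1)
      refine ⟨ε, hε, fun u hu1 hu2 => ?_⟩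
      funext ι
      rw [hxval u ι, hFeq s ι]
      congr 1
      ext q
      simp only [Set.mem_setOf_eq]
      constructor
      · rintro ⟨h1, h2, h3⟩
        exact ⟨h1, h2.trans_lt hu1, h3⟩
      · rintro ⟨h1, h2, h3⟩
        exact ⟨h1, hw u hu1 hu2 q.1 (Statement5Aux.mem_T A h1 h2), h3⟩
    · -- the counting identity
      intro t ι
      rw [hsetle t ι]
      exact ⟨hCfin t ι, hxval t ι⟩
  -- uniqueness of the a-solution
  have huniq : ∀ x', IsThinningSolution m Q a x' → x' = x := by
    intro x' hx'
    obtain ⟨hx'mono, hx'0, hx'rc, xm', hxm'lim, hx'eq⟩ := hx'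
    -- value of the left limit of x'
    have U1 : ∀ s : ℝ≥0, 0 < s → ∀ κ : Fin m,
        xm' s κ = {q : ℝ≥0 × ℝ≥0 | q ∈ Q κ ∧ q.1 < s ∧ q.2 ≤ a q.1 (xm' q.1) κ}.ncard := by
      intro s hs κ
      obtain ⟨ε, hε, hlim⟩ := hxm'lim s hs
      have hWfin : {q : ℝ≥0 × ℝ≥0 | q ∈ Q κ ∧ q.1 < s ∧ q.2 ≤ a q.1 (xm' q.1) κ}.Finite :=
        (hx'eq s κ).1.subset (fun q hq => ⟨hq.1, hq.2.1.le, hq.2.2⟩)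
      obtain ⟨u, hu1, hu2, hu3⟩ := Statement5Aux.pick s ε hs hε
        (Prod.fst '' {q : ℝ≥0 × ℝ≥0 | q ∈ Q κ ∧ q.1 < s ∧ q.2 ≤ a q.1 (xm' q.1) κ})
        (hWfin.image _) (by rintro v ⟨q, hq, rfl⟩; exact hq.2.1)
      have h1 : x' u = xm' s := hlim u hu1 hu2
      rw [← congrFun h1 κ, (hx'eq u κ).2]
      congr 1
      ext q
      simp only [Set.mem_setOf_eq]
      constructor
      · rintro ⟨h1, h2, h3⟩
        exact ⟨h1, h2.trans_lt hu1, h3⟩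
      · rintro ⟨h1, h2, h3⟩
        exact ⟨h1, hu3 q.1 ⟨q, ⟨h1, h2, h3⟩, rfl⟩, h3⟩
    -- event times for the comparison induction
    set E : Set ℝ≥0 := {v | ∃ (κ : Fin m) (q : ℝ≥0 × ℝ≥0), q ∈ Q κ ∧ q.1 = v ∧
      (q.2 ≤ a q.1 (xm' q.1) κ ∨ (q ∈ A κ ∧ q.2 ≤ a q.1 (Fa q.1) κ))} with hE
    have hEfin : ∀ s : ℝ≥0, (E ∩ Set.Iio s).Finite := by
      intro s
      have : E ∩ Set.Iio s ⊆
          (⋃ κ, Prod.fst '' {q : ℝ≥0 × ℝ≥0 | q ∈ Q κ ∧ q.1 ≤ s ∧ q.2 ≤ a q.1 (xm' q.1) κ}) ∪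
          (⋃ κ, Prod.fst '' {q : ℝ≥0 × ℝ≥0 | q ∈ A κ ∧ q.1 ≤ s}) := by
        rintro v ⟨⟨κ, q, hq, rfl, hcase⟩, hlt⟩
        rcases hcase with h | h
        · exact Or.inl (Set.mem_iUnion.2 ⟨κ, ⟨q, ⟨hq, le_of_lt hlt, h⟩, rfl⟩⟩)
        · exact Or.inr (Set.mem_iUnion.2 ⟨κ, ⟨q, ⟨h.1, le_of_lt hlt⟩, rfl⟩⟩)
      exact Set.Finite.subset (Set.Finite.union
        (Set.finite_iUnion (fun κ => ((hx'eq s κ).1.image _)))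
        (Set.finite_iUnion (fun κ => ((hAfin κ s).image _)))) this
    set nu : ℝ≥0 → ℕ := fun s => (E ∩ Set.Iio s).ncard with hnu
    have hnult : ∀ v s : ℝ≥0, v ∈ E → v < s → nu v < nu s := by
      intro v s hv hlt
      apply Set.ncard_lt_ncard _ (hEfin s)
      constructor
      · exact Set.inter_subset_inter_right E (fun w hw => lt_trans hw hlt)
      · intro hsub
        exact absurd (hsub ⟨hv, hlt⟩).2 (lt_irrefl v)
    have U2 : ∀ (n : ℕ) (s : ℝ≥0), nu s ≤ n → ∀ κ : Fin m,
        {q : ℝ≥0 × ℝ≥0 | q ∈ Q κ ∧ q.1 < s ∧ q.2 ≤ a q.1 (xm' q.1) κ}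
          = {q : ℝ≥0 × ℝ≥0 | q ∈ A κ ∧ q.1 < s ∧ q.2 ≤ a q.1 (Fa q.1) κ} := by
      intro n
      induction n using Nat.strong_induction_on with
      | _ n ih =>
        intro s hn κ
        have key : ∀ q : ℝ≥0 × ℝ≥0, q ∈ Q κ → q.1 < s → q.1 ∈ E → xm' q.1 = Fa q.1 := by
          intro q hqQ hlt hqE
          have hq1pos := (hQpos κ q hqQ).1
          have hνq : nu q.1 < n := lt_of_lt_of_le (hnult q.1 s hqE hlt) hn
          funext κ'
          rw [U1 q.1 hq1pos κ', ih (nu q.1) hνq q.1 le_rfl κ', ← hFeq q.1 κ']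
        ext q
        simp only [Set.mem_setOf_eq]
        constructor
        · rintro ⟨hqQ, hlt, hacc⟩
          have hqE : q.1 ∈ E := ⟨κ, q, hqQ, rfl, Or.inl hacc⟩
          have hxmF := key q hqQ hlt hqE
          rw [hxmF] at hacc
          exact ⟨hacc_mem κ q hqQ (hQpos κ q hqQ).1 hacc, hlt, hacc⟩
        · rintro ⟨hqA, hlt, hacc⟩
          have hqQ := hAQ κ q hqA
          have hqE : q.1 ∈ E := ⟨κ, q, hqQ, rfl, Or.inr ⟨hqA, hacc⟩⟩
          have hxmF := key q hqQ hlt hqE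
          rw [← hxmF] at hacc
          exact ⟨hqQ, hlt, hacc⟩
    funext t ι
    have hset := U2 (nu (t + 1)) (t + 1) le_rfl ι
    rw [(hx'eq t ι).2, hxval t ι]
    congr 1
    ext q
    simp only [Set.mem_setOf_eq]
    have htt : t < t + 1 := lt_add_of_pos_right t one_pos
    constructor
    · rintro ⟨h1, h2, h3⟩
      have hq : q ∈ {q : ℝ≥0 × ℝ≥0 | q ∈ A ι ∧ q.1 < t + 1 ∧ q.2 ≤ a q.1 (Fa q.1) ι} :=
        hset ▸ (⟨h1, h2.trans_lt htt, h3⟩ : q ∈ {q : ℝ≥0 × ℝ≥0 | q ∈ Q ι ∧ q.1 < t + 1 ∧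
          q.2 ≤ a q.1 (xm' q.1) ι})
      exact ⟨hq.1, h2, hq.2.2⟩
    · rintro ⟨h1, h2, h3⟩
      have hq : q ∈ {q : ℝ≥0 × ℝ≥0 | q ∈ Q ι ∧ q.1 < t + 1 ∧ q.2 ≤ a q.1 (xm' q.1) ι} :=
        hset.symm ▸ (⟨h1, h2.trans_lt htt, h3⟩ : q ∈ {q : ℝ≥0 × ℝ≥0 | q ∈ A ι ∧ q.1 < t + 1 ∧
          q.2 ≤ a q.1 (Fa q.1) ι})
      exact ⟨hq.1, h2, hq.2.2⟩
  constructor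
  · exact ⟨x, hx, huniq⟩
  · intro x₀ y₀ hx₀ hy₀
    have hy₀y : y₀ = y := hyuniq y₀ hy₀
    have hx₀x : x₀ = x := huniq x₀ hx₀
    subst hy₀y
    subst hx₀x
    have hsub : ∀ (u : ℝ≥0) (ι : Fin m),
        {q : ℝ≥0 × ℝ≥0 | q ∈ A ι ∧ q.1 ≤ u ∧ q.2 ≤ a q.1 (Fa q.1) ι}
          ⊆ {q : ℝ≥0 × ℝ≥0 | q ∈ A ι ∧ q.1 ≤ u} := fun u ι q hq => ⟨hq.1, hq.2.1⟩
    constructor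
    · intro ι s t hst
      have hds := Set.ncard_diff_add_ncard_of_subset (hsub s ι) (hAfin ι s)
      have hdt := Set.ncard_diff_add_ncard_of_subset (hsub t ι) (hAfin ι t)
      have hmono : {q : ℝ≥0 × ℝ≥0 | q ∈ A ι ∧ q.1 ≤ s} \
            {q : ℝ≥0 × ℝ≥0 | q ∈ A ι ∧ q.1 ≤ s ∧ q.2 ≤ a q.1 (Fa q.1) ι}
          ⊆ {q : ℝ≥0 × ℝ≥0 | q ∈ A ι ∧ q.1 ≤ t} \
            {q : ℝ≥0 × ℝ≥0 | q ∈ A ι ∧ q.1 ≤ t ∧ q.2 ≤ a q.1 (Fa q.1) ι} := by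
        rintro q ⟨⟨hqA, hqle⟩, hnot⟩
        refine ⟨⟨hqA, hqle.trans hst⟩, fun hmem => hnot ⟨hqA, hqle, hmem.2.2⟩⟩
      have hd := Set.ncard_le_ncard hmono ((hAfin ι t).diff)
      rw [hyval s ι, hyval t ι, hxval s ι, hxval t ι]
      omega
    · intro t ι
      rw [hyval t ι, hxval t ι]
      exact Set.ncard_le_ncard (hsub t ι) (hAfin ι t)
end
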